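/- Let G be a finitely generated torsion-free nilpotent group and let φ : G → G be a group homomorphism such that the induced endomorphism φ_1 of the quotient G/γ_2(G) is an automorphism. Then φ is an automorphism of G. -/

import Mathlib

/-! Auxiliary material for the main theorem: an endomorphism of a finitely generated
(torsion-free) nilpotent group which induces an automorphism of the abelianization is an
automorphism. -/

open Subgroup
open scoped commutatorElement

universe u

section CentralCommutators

variable {G : Type u} [Group G]

private lemma conj_central {z : G} (hz : z ∈ Subgroup.center G) (g : G) :
    g * z * g⁻¹ = z := by
  have h : g * z = z * g := Subgroup.mem_center_iff.mp hz g
  rw [h]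
  group

private lemma conj_central_inv {z : G} (hz : z ∈ Subgroup.center G) (g : G) :
    g⁻¹ * z * g = z := by
  have h : g⁻¹ * z = z * g⁻¹ := Subgroup.mem_center_iff.mp hz g⁻¹
  rw [h]
  group

private lemma comm_central_left {z : G} (hz : z ∈ Subgroup.center G) (a b : G) :
    ⁅a * z, b⁆ = ⁅a, b⁆ := by
  have h : b * z = z * b := Subgroup.mem_center_iff.mp hz b
  calc ⁅a * z, b⁆ = a * (z * b) * z⁻¹ * a⁻¹ * b⁻¹ := by group
  _ = a * (b * z) * z⁻¹ * a⁻¹ * b⁻¹ := by rw [h]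
  _ = ⁅a, b⁆ := by group

private lemma comm_central_right {z : G} (hz : z ∈ Subgroup.center G) (a b : G) :
    ⁅a, b * z⁆ = ⁅a, b⁆ := by
  have h : a⁻¹ * z = z * a⁻¹ := Subgroup.mem_center_iff.mp hz a⁻¹
  calc ⁅a, b * z⁆ = a * b * (z * a⁻¹) * z⁻¹ * b⁻¹ := by group
  _ = a * b * (a⁻¹ * z) * z⁻¹ * b⁻¹ := by rw [← h]
  _ = ⁅a, b⁆ := by group

/-- Raw commutator expansion in the second argument. -/
private lemma comm_mul_right (y g h : G) :
    ⁅y, g * h⁆ = ⁅y, g⁆ * (g * ⁅y, h⁆ * g⁻¹) := by group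

/-- Raw commutator expansion in the first argument. -/
private lemma comm_mul_left (y z g : G) :
    ⁅y * z, g⁆ = (y * ⁅z, g⁆ * y⁻¹) * ⁅y, g⁆ := by group

private lemma comm_inv_right (y g : G) :
    ⁅y, g⁻¹⁆ = g⁻¹ * ⁅y, g⁆⁻¹ * g := by group

private lemma comm_inv_left (y g : G) :
    ⁅y⁻¹, g⁆ = y⁻¹ * ⁅y, g⁆⁻¹ * y := by group

end CentralCommutators

section Frattini

/-- In a nilpotent group, a subgroup which together with the commutator subgroup generates the
whole group is the whole group. -/
private lemma myFrattiniNilpotent :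
    ∀ (G : Type u) [Group G] [Group.IsNilpotent G],
      ∀ H : Subgroup G, H ⊔ commutator G = ⊤ → H = ⊤ := by
  intro G _ _
  refine nilpotent_center_quotient_ind
    (P := fun G hG _ => letI := hG; ∀ H : Subgroup G, H ⊔ commutator G = ⊤ → H = ⊤) G ?_ ?_
  · intro G _ _ H _
    ext x
    simp [Subsingleton.elim x 1, Subgroup.one_mem]
  · intro G _ _ IH H h
    have hsurj : Function.Surjective (QuotientGroup.mk' (Subgroup.center G)) :=
      QuotientGroup.mk'_surjective _
    have hcommutator :
        Subgroup.map (QuotientGroup.mk' (Subgroup.center G)) (commutator G) =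
          commutator (G ⧸ Subgroup.center G) := by
      rw [_root_.commutator_def, _root_.commutator_def, Subgroup.map_commutator,
        Subgroup.map_top_of_surjective _ hsurj]
    have h1 : Subgroup.map (QuotientGroup.mk' (Subgroup.center G)) H ⊔
        commutator (G ⧸ Subgroup.center G) = ⊤ := by
      rw [← hcommutator, ← Subgroup.map_sup, h, Subgroup.map_top_of_surjective _ hsurj]
    have h2 := IH _ h1
    have h4 := Subgroup.comap_map_eq (QuotientGroup.mk' (Subgroup.center G)) H
    rw [h2, Subgroup.comap_top, QuotientGroup.ker_mk'] at h4
    have h5 : commutator G ≤ H := by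
      rw [_root_.commutator_def, Subgroup.commutator_le]
      intro g₁ _ g₂ _
      have m1 : g₁ ∈ (↑(H ⊔ Subgroup.center G) : Set G) := by rw [← h4]; trivial
      have m2 : g₂ ∈ (↑(H ⊔ Subgroup.center G) : Set G) := by rw [← h4]; trivial
      rw [Subgroup.mul_normal] at m1 m2
      obtain ⟨a, ha, z, hz, rfl⟩ := m1
      obtain ⟨b, hb, w, hw, rfl⟩ := m2
      rw [comm_central_left hz, comm_central_right hw, commutatorElement_def]
      exact H.mul_mem (H.mul_mem (H.mul_mem ha hb) (H.inv_mem ha)) (H.inv_mem hb)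
    have h6 : H ⊔ commutator G ≤ H := sup_le le_rfl h5
    rw [h] at h6
    exact le_antisymm le_top h6

end Frattini

section FGExtension

/-- If a normal subgroup and the corresponding quotient are finitely generated then so is the
group. -/
private lemma fg_of_normal_of_quotient {G : Type u} [Group G] (N : Subgroup G) [N.Normal]
    (hN : N.FG) (hQ : Group.FG (G ⧸ N)) : Group.FG G := by
  obtain ⟨S, hScl, hSfin⟩ := (Subgroup.fg_iff N).mp hN
  obtain ⟨U, hUcl, hUfin⟩ := Group.fg_iff.mp hQ
  have hsurj : Function.Surjective (QuotientGroup.mk' N) := QuotientGroup.mk'_surjective _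
  set T : Set G := Function.surjInv hsurj '' U with hT
  have hTfin : T.Finite := hUfin.image _
  have hmkT : (QuotientGroup.mk' N) '' T = U := by
    rw [hT, Set.image_image]
    trans (fun u => u) '' U
    · exact Set.image_congr fun u _ => Function.surjInv_eq hsurj u
    · simp
  have h3 : Subgroup.map (QuotientGroup.mk' N) (Subgroup.closure T) = ⊤ := by
    rw [MonoidHom.map_closure, hmkT, hUcl]
  have h4 := Subgroup.comap_map_eq (QuotientGroup.mk' N) (Subgroup.closure T)
  rw [h3, Subgroup.comap_top, QuotientGroup.ker_mk'] at h4
  refine Group.fg_iff.mpr ⟨S ∪ T, ?_, hSfin.union hTfin⟩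
  rw [Subgroup.closure_union, hScl, sup_comm]
  exact h4.symm

end FGExtension

section AbelianNoetherian

/-- Every subgroup of a finitely generated abelian group is finitely generated. -/
private lemma comm_subgroup_fg {A : Type u} [CommGroup A] [Group.FG A] (H : Subgroup A) :
    H.FG := by
  rw [Subgroup.fg_iff_add_fg]
  haveI : Module.Finite ℤ (Additive A) :=
    Module.Finite.iff_addGroup_fg.mpr (AddGroup.fg_of_group_fg (G := A))
  haveI : IsNoetherian ℤ (Additive A) := isNoetherian_of_isNoetherianRing_of_finite ℤ _
  have h := IsNoetherian.noetherian (AddSubgroup.toIntSubmodule H.toAddSubgroup)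
  have h2 := (Submodule.fg_iff_addSubgroup_fg _).mp h
  rwa [AddSubgroup.toIntSubmodule_toAddSubgroup] at h2

end AbelianNoetherian

section LCS

private lemma lcs_succ' {G : Type u} [Group G] (n : ℕ) :
    (⊤ : Subgroup G).lowerCentralSeries (n + 1) = ⁅(⊤ : Subgroup G).lowerCentralSeries n, (⊤ : Subgroup G)⁆ := rfl

/-- For a surjective homomorphism, the lower central series of the target is contained in the
image of the lower central series. -/
private lemma lcs_le_map_of_surjective {G : Type u} {H : Type u} [Group G] [Group H]
    (f : G →* H) (hf : Function.Surjective f) (n : ℕ) :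
    (⊤ : Subgroup H).lowerCentralSeries n ≤ Subgroup.map f ((⊤ : Subgroup G).lowerCentralSeries n) := by
  induction n with
  | zero =>
      rw [Subgroup.lowerCentralSeries_zero, Subgroup.lowerCentralSeries_zero,
        Subgroup.map_top_of_surjective f hf]
  | succ n ih =>
      rw [lcs_succ', lcs_succ']
      exact Subgroup.commutator_le_map_commutator ih
        (by rw [Subgroup.map_top_of_surjective f hf])

end LCS

section Noetherian

/-- Every subgroup of a finitely generated nilpotent group is finitely generated. -/
private lemma noeth :
    ∀ (n : ℕ) (G : Type u) [Group G], Group.FG G → (⊤ : Subgroup G).lowerCentralSeries n = ⊥ →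
      ∀ H : Subgroup G, H.FG := by
  intro n
  induction n with
  | zero =>
      intro G _ _ hc H
      have hbot : H = ⊥ := by
        rw [eq_bot_iff, ← hc]
        exact le_top
      rw [hbot]
      exact ⟨∅, by simp⟩
  | succ n ih =>
      intro G _ hfg hc H
      set A := (⊤ : Subgroup G).lowerCentralSeries n with hA
      have hAcentral : A ≤ Subgroup.center G := by
        intro a ha
        rw [Subgroup.mem_center_iff]
        intro g
        have h1 : ⁅a, g⁆ ∈ (⊤ : Subgroup G).lowerCentralSeries (n + 1) := by
          rw [lcs_succ']
          exact Subgroup.commutator_mem_commutator ha (Subgroup.mem_top g)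
        rw [hc, Subgroup.mem_bot] at h1
        have := commutatorElement_eq_one_iff_mul_comm.mp h1
        rw [this]
      -- the quotient by `A`
      have hQc : (⊤ : Subgroup (G ⧸ A)).lowerCentralSeries n = ⊥ := by
        rw [eq_bot_iff]
        refine le_trans (lcs_le_map_of_surjective (QuotientGroup.mk' A)
          (QuotientGroup.mk'_surjective A) n) ?_
        have hle : (⊤ : Subgroup G).lowerCentralSeries n ≤ (QuotientGroup.mk' A).ker := by
          rw [QuotientGroup.ker_mk']
        exact le_of_eq ((Subgroup.map_eq_bot_iff _).mpr hle)
      have IHQ : ∀ K : Subgroup (G ⧸ A), K.FG := ih (G ⧸ A) inferInstance hQc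
      -- A is finitely generated
      have hAfg : A.FG := by
        rcases n with _ | m
        · -- A = ⊤
          have : A = ⊤ := rfl
          rw [this]
          exact Group.fg_def.mp hfg
        · -- A = ⁅B, ⊤⁆ with B = lowerCentralSeries G m
          set B := (⊤ : Subgroup G).lowerCentralSeries m with hB
          have hAB : A = ⁅B, (⊤ : Subgroup G)⁆ := rfl
          obtain ⟨S, hScl, hSfin⟩ := Group.fg_iff.mp hfg
          -- generators of B modulo A
          obtain ⟨U, hUcl, hUfin⟩ :=
            (Subgroup.fg_iff _).mp (IHQ (Subgroup.map (QuotientGroup.mk' A) B))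
          haveI : Finite U := hUfin.to_subtype
          have hUmem : ∀ u : U, (u : G ⧸ A) ∈ Subgroup.map (QuotientGroup.mk' A) B := by
            intro u
            rw [← hUcl]
            exact Subgroup.subset_closure u.2
          have hchoice : ∀ u : U, ∃ x : G, x ∈ B ∧ QuotientGroup.mk' A x = (u : G ⧸ A) := by
            intro u
            obtain ⟨x, hx, hxe⟩ := Subgroup.mem_map.mp (hUmem u)
            exact ⟨x, hx, hxe⟩
          choose xf hxfB hxfmk using hchoice
          set X : Set G := Set.range xf with hX
          have hXfin : X.Finite := Set.finite_range xf
          have hXB : X ⊆ ↑B := by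
            rintro _ ⟨u, rfl⟩
            exact hxfB u
          have hmkX : QuotientGroup.mk' A '' X = U := by
            ext q
            constructor
            · rintro ⟨_, ⟨u, rfl⟩, rfl⟩
              rw [hxfmk u]
              exact u.2
            · intro hq
              exact ⟨xf ⟨q, hq⟩, ⟨⟨q, hq⟩, rfl⟩, hxfmk ⟨q, hq⟩⟩
          -- B = closure X ⊔ A
          have hBX : B = Subgroup.closure (X ∪ ↑A) := by
            rw [Subgroup.closure_union, Subgroup.closure_eq]
            apply le_antisymm
            · intro y hy
              have h1 : QuotientGroup.mk' A y ∈ Subgroup.closure U := by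
                rw [hUcl]
                exact Subgroup.mem_map_of_mem _ hy
              rw [← hmkX, ← MonoidHom.map_closure] at h1
              obtain ⟨x, hx, hxy⟩ := Subgroup.mem_map.mp h1
              have h2 : x⁻¹ * y ∈ A := by
                have h5 : x⁻¹ * y ∈ (QuotientGroup.mk' A).ker := by
                  rw [MonoidHom.mem_ker, map_mul, map_inv, hxy]
                  group
                rwa [QuotientGroup.ker_mk'] at h5
              have h3 : y = x * (x⁻¹ * y) := by group
              rw [h3]
              exact Subgroup.mul_mem _ (le_sup_left (α := Subgroup G)
                (a := Subgroup.closure X) hx) (le_sup_right (α := Subgroup G) h2)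
            · refine sup_le ?_ ?_
              · rw [Subgroup.closure_le]
                exact hXB
              · rw [hAB]
                exact Subgroup.commutator_le_left B ⊤
          -- the finite generating set of A
          set V : Set G := (fun p : G × G => ⁅p.1, p.2⁆) '' (X ×ˢ S) with hV
          have hVfin : V.Finite := (hXfin.prod hSfin).image _
          have hCA : Subgroup.closure V ≤ A := by
            rw [Subgroup.closure_le, hAB]
            rintro _ ⟨⟨x, s⟩, ⟨hx, _⟩, rfl⟩
            exact Subgroup.commutator_mem_commutator (hXB hx) (Subgroup.mem_top s)
          -- centrality facts
          have hcen : ∀ y ∈ B, ∀ g : G, ⁅y, g⁆ ∈ Subgroup.center G := by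
            intro y hy g
            apply hAcentral
            rw [hAB]
            exact Subgroup.commutator_mem_commutator hy (Subgroup.mem_top g)
          have key : A ≤ Subgroup.closure V := by
            rw [hAB, Subgroup.commutator_le]
            intro y hy g hgtop
            -- induction over y ∈ B = closure (X ∪ A)
            rw [hBX] at hy
            clear hgtop
            induction hy using Subgroup.closure_induction with
            | mem x hxmem =>
                -- x ∈ X ∪ A
                rcases hxmem with hxX | hxA
                · -- x ∈ X : induction over g ∈ closure S = ⊤
                  have hgmem : g ∈ Subgroup.closure S := by rw [hScl]; trivial
                  induction hgmem using Subgroup.closure_induction with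
                  | mem s hs =>
                      exact Subgroup.subset_closure ⟨(x, s), ⟨hxX, hs⟩, rfl⟩
                  | one =>
                      rw [commutatorElement_one_right]
                      exact Subgroup.one_mem _
                  | mul g₁ g₂ hg₁ hg₂ ih₁ ih₂ =>
                      rw [comm_mul_right, conj_central (hcen x (hXB hxX) g₂) g₁]
                      exact Subgroup.mul_mem _ ih₁ ih₂
                  | inv g₁ hg₁ ih₁ =>
                      rw [comm_inv_right,
                        conj_central_inv ((Subgroup.center G).inv_mem (hcen x (hXB hxX) g₁)) g₁]
                      exact Subgroup.inv_mem _ ih₁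
                · -- x ∈ A : commutator is trivial since x is central
                  have : ⁅x, g⁆ = 1 :=
                    commutatorElement_eq_one_iff_mul_comm.mpr
                      (Subgroup.mem_center_iff.mp (hAcentral hxA) g).symm
                  rw [this]
                  exact Subgroup.one_mem _
            | one =>
                rw [commutatorElement_one_left]
                exact Subgroup.one_mem _
            | mul y₁ y₂ hy₁ hy₂ ih₁ ih₂ =>
                have hy₂B : y₂ ∈ B := by rw [hBX]; exact hy₂
                rw [comm_mul_left, conj_central (hcen y₂ hy₂B g) y₁]
                exact Subgroup.mul_mem _ ih₂ ih₁
            | inv y₁ hy₁ ih₁ =>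
                have hy₁B : y₁ ∈ B := by rw [hBX]; exact hy₁
                rw [comm_inv_left, conj_central_inv ((Subgroup.center G).inv_mem
                  (hcen y₁ hy₁B g)) y₁]
                exact Subgroup.inv_mem _ ih₁
          exact (Subgroup.fg_iff A).mpr ⟨V, le_antisymm hCA key, hVfin⟩
      -- now derive H.FG from hAfg, hAcentral and IHQ
      -- A is commutative
      letI : CommGroup ↥A :=
        { (inferInstance : Group ↥A) with
          mul_comm := fun a b => Subtype.ext
            (Subgroup.mem_center_iff.mp (hAcentral b.2) (a : G)) }
      haveI : Group.FG ↥A := (Group.fg_iff_subgroup_fg A).mpr hAfg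
      -- H ⊓ A is finitely generated as a group
      have h1 : ((H ⊓ A).subgroupOf A).FG := comm_subgroup_fg _
      haveI : Group.FG ↥((H ⊓ A).subgroupOf A) :=
        (Group.fg_iff_subgroup_fg _).mpr h1
      haveI hfgHA : Group.FG ↥(H ⊓ A) :=
        Group.fg_of_surjective
          (f := (Subgroup.subgroupOfEquivOfLe (inf_le_right : H ⊓ A ≤ A)).toMonoidHom)
          (Subgroup.subgroupOfEquivOfLe _).surjective
      -- the map from H to G ⧸ A
      set f : ↥H →* G ⧸ A := (QuotientGroup.mk' A).comp H.subtype with hf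
      have hker : f.ker = (H ⊓ A).subgroupOf H := by
        ext x
        simp only [hf, MonoidHom.mem_ker, MonoidHom.comp_apply, Subgroup.coe_subtype,
          Subgroup.mem_subgroupOf, Subgroup.mem_inf]
        rw [← MonoidHom.mem_ker, QuotientGroup.ker_mk']
        exact ⟨fun hx => ⟨x.2, hx⟩, fun hx => hx.2⟩
      haveI : Group.FG ↥((H ⊓ A).subgroupOf H) :=
        Group.fg_of_surjective
          (f := (Subgroup.subgroupOfEquivOfLe (inf_le_left : H ⊓ A ≤ H)).symm.toMonoidHom)
          (Subgroup.subgroupOfEquivOfLe _).symm.surjective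
      have hkerfg : f.ker.FG := by
        rw [hker]
        exact (Group.fg_iff_subgroup_fg _).mp inferInstance
      -- the quotient of H by the kernel is finitely generated
      have hrangefg : Group.FG ↥f.range := (Group.fg_iff_subgroup_fg _).mpr (IHQ f.range)
      haveI : Group.FG ↥f.range := hrangefg
      haveI hquot : Group.FG (↥H ⧸ f.ker) :=
        Group.fg_of_surjective
          (f := (QuotientGroup.quotientKerEquivRange f).symm.toMonoidHom)
          (QuotientGroup.quotientKerEquivRange f).symm.surjective
      haveI : Group.FG ↥H := fg_of_normal_of_quotient f.ker hkerfg hquot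
      exact (Group.fg_iff_subgroup_fg H).mp inferInstance

end Noetherian

section IterHom

variable {G : Type u} [Group G]

private def iterHom (φ : G →* G) : ℕ → (G →* G)
  | 0 => MonoidHom.id G
  | n + 1 => φ.comp (iterHom φ n)

private lemma iterHom_surjective {φ : G →* G} (hφ : Function.Surjective φ) (n : ℕ) :
    Function.Surjective (iterHom φ n) := by
  induction n with
  | zero => exact Function.surjective_id
  | succ n ih => exact hφ.comp ih

private lemma iterHom_ker_mono (φ : G →* G) : Monotone fun n => (iterHom φ n).ker := by
  apply monotone_nat_of_le_succ
  intro n x hx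
  rw [MonoidHom.mem_ker] at hx ⊢
  show φ (iterHom φ n x) = 1
  rw [hx, map_one]

end IterHom

/-- Let `G` be a finitely generated torsion-free nilpotent group and `φ : G → G` a group
homomorphism such that the induced endomorphism of `G/γ₂(G)` (the abelianization) is an
automorphism. Then `φ` is an automorphism of `G`. -/
theorem endo_of_fg_torsionFree_nilpotent_is_aut_of_abelianization_aut
    {G : Type*} [Group G] [Group.FG G] [Group.IsNilpotent G]
    (htf : ∀ g : G, g ≠ 1 → ¬IsOfFinOrder g) (φ : G →* G)
    (h : Function.Bijective (Abelianization.map φ)) :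
    Function.Bijective φ := by
  -- Step 1: surjectivity
  have hsur : Function.Surjective φ := by
    have hreq : φ.range ⊔ commutator G = ⊤ := by
      rw [eq_top_iff]
      intro g _
      obtain ⟨q, hq⟩ := h.surjective (Abelianization.of g)
      obtain ⟨g', rfl⟩ := QuotientGroup.mk_surjective q
      have hq' : Abelianization.of (φ g') = Abelianization.of g := by
        rw [← hq]; rfl
      have hmem : (φ g')⁻¹ * g ∈ commutator G := by
        have : Abelianization.of ((φ g')⁻¹ * g) = 1 := by
          rw [map_mul, map_inv, hq']
          group
        exact (QuotientGroup.eq_one_iff _).mp this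
      have hgeq : g = φ g' * ((φ g')⁻¹ * g) := by group
      rw [hgeq]
      exact Subgroup.mul_mem _
        (le_sup_left (a := φ.range) ⟨g', rfl⟩)
        (le_sup_right (a := φ.range) hmem)
    have := myFrattiniNilpotent G φ.range hreq
    rw [← MonoidHom.range_eq_top]
    exact this
  refine ⟨?_, hsur⟩
  -- Step 2: injectivity, via the Noetherian property
  obtain ⟨n₀, hn₀⟩ := _root_.nilpotent_iff_lowerCentralSeries.mp ‹Group.IsNilpotent G›
  have noe : ∀ H : Subgroup G, H.FG := noeth n₀ G ‹Group.FG G› hn₀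
  -- the supremum of the kernels of the iterates is finitely generated
  set K : Subgroup G := ⨆ n, (iterHom φ n).ker with hK
  obtain ⟨T, hTcl, hTfin⟩ := (Subgroup.fg_iff K).mp (noe K)
  have hdir : Directed (· ≤ ·) fun n => (iterHom φ n).ker :=
    (iterHom_ker_mono φ).directed_le
  have hidx : ∀ t ∈ T, ∃ n : ℕ, t ∈ (iterHom φ n).ker := by
    intro t ht
    have : t ∈ K := hTcl ▸ Subgroup.subset_closure ht
    rw [hK] at this
    exact (Subgroup.mem_iSup_of_directed hdir).mp this
  choose idx hidx' using hidx
  set N : ℕ := hTfin.toFinset.attach.sup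
    (fun t => idx t.1 (hTfin.mem_toFinset.mp t.2)) with hN
  have hKN : K ≤ (iterHom φ N).ker := by
    rw [← hTcl, Subgroup.closure_le]
    intro t ht
    have h1 : t ∈ hTfin.toFinset := hTfin.mem_toFinset.mpr ht
    have hle : idx t (hTfin.mem_toFinset.mp h1) ≤ N := by
      rw [hN]
      exact Finset.le_sup
        (f := fun t : {x // x ∈ hTfin.toFinset} => idx t.1 (hTfin.mem_toFinset.mp t.2))
        (Finset.mem_attach _ ⟨t, h1⟩)
    exact iterHom_ker_mono φ hle (hidx' t (hTfin.mem_toFinset.mp h1))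
  -- conclude injectivity
  have hker : φ.ker = ⊥ := by
    rw [eq_bot_iff]
    intro x hx
    obtain ⟨y, rfl⟩ := iterHom_surjective hsur N x
    have hy : y ∈ (iterHom φ (N + 1)).ker := by
      rw [MonoidHom.mem_ker]
      show φ (iterHom φ N y) = 1
      exact hx
    have : y ∈ (iterHom φ N).ker :=
      hKN (le_iSup (fun n => (iterHom φ n).ker) (N + 1) hy)
    rw [Subgroup.mem_bot]
    exact this
  exact (MonoidHom.ker_eq_bot_iff φ).mp hker
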